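/- arXiv:1702.08505 — 2 statements merged into one kernel-verified Lean document; each statement's English description precedes it below -/
import Mathlib

section
/- Fix σ > 0 and α < 1, and set v = α·√(2σ²). Define for t > 0 and τ ∈ (0, t] the function G(t, τ) = e^{-τ} · ∫_{-∞}^{v t - √(2σ²)(t-τ) - 1} (2π σ² τ)^{-1/2} e^{-y²/(2σ²τ)} dy. Then as t → ∞, ln(sup_{τ ∈ (0,t]} G(t, τ)) / t converges to -φ(α), where φ(α) = 2(√2 − 1)(1 − α) if α ≥ 1 − √2, and φ(α) = 1 + α² if α ≤ 1 − √2. -/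
open Real Filter MeasureTheory

private lemma sqrt_fact {X : ℝ} (hX : 0 < X) : X ^ (-(1:ℝ)/2) = (Real.sqrt X)⁻¹ := by
  rw [show (-(1:ℝ)/2) = -(1/2) by norm_num, Real.rpow_neg hX.le, Real.sqrt_eq_rpow]

private lemma pdf_integrable {V : ℝ} (hV : 0 < V) :
    Integrable (fun y : ℝ => (2*(π*V)) ^ (-(1:ℝ)/2) * Real.exp (-y^2/(2*V))) := by
  have h : ∀ y : ℝ, -y^2/(2*V) = -((2*V)⁻¹) * y^2 := fun y => by field_simp
  simp_rw [h]
  exact (integrable_exp_neg_mul_sq (by positivity)).const_mul _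

private lemma pdf_norm {V : ℝ} (hV : 0 < V) (m : ℝ) :
    ∫ y : ℝ, (2*(π*V)) ^ (-(1:ℝ)/2) * Real.exp (-(y-m)^2/(2*V)) = 1 := by
  rw [MeasureTheory.integral_const_mul,
    integral_sub_right_eq_self (fun y : ℝ => Real.exp (-y^2/(2*V))) m]
  have h : ∀ y : ℝ, -y^2/(2*V) = -((2*V)⁻¹) * y^2 := fun y => by field_simp
  simp_rw [h]
  rw [integral_gaussian]
  have h2 : π / (2*V)⁻¹ = 2*(π*V) := by field_simp
  rw [h2, sqrt_fact (by positivity)]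
  exact inv_mul_cancel₀ (ne_of_gt (Real.sqrt_pos.2 (by positivity)))

private lemma pdf_int_le_one {V : ℝ} (hV : 0 < V) (m : ℝ) :
    ∫ y in Set.Iic m, (2*(π*V)) ^ (-(1:ℝ)/2) * Real.exp (-y^2/(2*V)) ≤ 1 := by
  have h := setIntegral_le_integral (μ := volume) (s := Set.Iic m) (pdf_integrable hV)
    (ae_of_all _ fun y => by positivity)
  calc _ ≤ ∫ y : ℝ, (2*(π*V)) ^ (-(1:ℝ)/2) * Real.exp (-y^2/(2*V)) := h
    _ = 1 := by simpa using pdf_norm hV 0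

private lemma chernoff {V : ℝ} (hV : 0 < V) {m : ℝ} (hm : m ≤ 0) :
    ∫ y in Set.Iic m, (2*(π*V)) ^ (-(1:ℝ)/2) * Real.exp (-y^2/(2*V))
      ≤ Real.exp (-m^2/(2*V)) := by
  have hshift : Integrable (fun y : ℝ => (2*(π*V)) ^ (-(1:ℝ)/2) * Real.exp (-(y-m)^2/(2*V))) :=
    (pdf_integrable hV).comp_sub_right m
  have key : ∀ y ∈ Set.Iic m,
      (2*(π*V)) ^ (-(1:ℝ)/2) * Real.exp (-y^2/(2*V))
        ≤ Real.exp (-m^2/(2*V)) * ((2*(π*V)) ^ (-(1:ℝ)/2) * Real.exp (-(y-m)^2/(2*V))) := by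
    intro y hy
    have hy' : y ≤ m := hy
    have h1 : Real.exp (-y^2/(2*V)) ≤ Real.exp (-m^2/(2*V)) * Real.exp (-(y-m)^2/(2*V)) := by
      rw [← Real.exp_add]
      apply Real.exp_le_exp.2
      rw [← add_div, div_le_div_iff_of_pos_right (by positivity)]
      nlinarith [mul_nonneg (neg_nonneg.2 hm) (sub_nonneg.2 hy')]
    calc (2*(π*V)) ^ (-(1:ℝ)/2) * Real.exp (-y^2/(2*V))
        ≤ (2*(π*V)) ^ (-(1:ℝ)/2) * (Real.exp (-m^2/(2*V)) * Real.exp (-(y-m)^2/(2*V))) :=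
          mul_le_mul_of_nonneg_left h1 (Real.rpow_nonneg (by positivity) _)
      _ = Real.exp (-m^2/(2*V)) * ((2*(π*V)) ^ (-(1:ℝ)/2) * Real.exp (-(y-m)^2/(2*V))) := by ring
  calc ∫ y in Set.Iic m, (2*(π*V)) ^ (-(1:ℝ)/2) * Real.exp (-y^2/(2*V))
      ≤ ∫ y in Set.Iic m,
          Real.exp (-m^2/(2*V)) * ((2*(π*V)) ^ (-(1:ℝ)/2) * Real.exp (-(y-m)^2/(2*V))) :=
        setIntegral_mono_on ((pdf_integrable hV).integrableOn)
          (hshift.const_mul _).integrableOn measurableSet_Iic key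
    _ = Real.exp (-m^2/(2*V)) *
          ∫ y in Set.Iic m, (2*(π*V)) ^ (-(1:ℝ)/2) * Real.exp (-(y-m)^2/(2*V)) :=
        MeasureTheory.integral_const_mul _ _
    _ ≤ Real.exp (-m^2/(2*V)) * 1 := by
        apply mul_le_mul_of_nonneg_left _ (Real.exp_nonneg _)
        calc _ ≤ ∫ y : ℝ, (2*(π*V)) ^ (-(1:ℝ)/2) * Real.exp (-(y-m)^2/(2*V)) :=
              setIntegral_le_integral hshift (ae_of_all _ fun y => by positivity)
          _ = 1 := pdf_norm hV m
    _ = Real.exp (-m^2/(2*V)) := mul_one _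

private lemma tail_lower {V : ℝ} (hV : 0 < V) {m : ℝ} (hm : m ≤ 0) :
    (2*(π*V)) ^ (-(1:ℝ)/2) * Real.exp (-(m-1)^2/(2*V))
      ≤ ∫ y in Set.Iic m, (2*(π*V)) ^ (-(1:ℝ)/2) * Real.exp (-y^2/(2*V)) := by
  have h1 : (2*(π*V)) ^ (-(1:ℝ)/2) * Real.exp (-(m-1)^2/(2*V))
      = ∫ _y in Set.Ioc (m-1) m, (2*(π*V)) ^ (-(1:ℝ)/2) * Real.exp (-(m-1)^2/(2*V)) := by
    rw [setIntegral_const, Real.volume_real_Ioc_of_le (by linarith), show m - (m-1) = 1 by ring,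
      one_smul]
  rw [h1]
  calc _ ≤ ∫ y in Set.Ioc (m-1) m, (2*(π*V)) ^ (-(1:ℝ)/2) * Real.exp (-y^2/(2*V)) := by
        apply setIntegral_mono_on
          (integrableOn_const measure_Ioc_lt_top.ne)
          ((pdf_integrable hV).integrableOn) measurableSet_Ioc
        intro y hy
        apply mul_le_mul_of_nonneg_left _ (Real.rpow_nonneg (by positivity) _)
        apply Real.exp_le_exp.2
        rw [div_le_div_iff_of_pos_right (by positivity)]
        nlinarith [hy.1, hy.2]
      _ ≤ _ := setIntegral_mono_set ((pdf_integrable hV).integrableOn)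
          (ae_of_all _ fun y => by positivity) (Set.Ioc_subset_Iic_self).eventuallyLE

private lemma tendsto_aux (b₀ a c d : ℝ) (hc : 0 < c) (hd : 0 < d) :
    Tendsto (fun t : ℝ => (-(b₀*t) - 1/2 * Real.log (c*t) - (a*t+2)^2/(d*t))/t)
      atTop (nhds (-b₀ - a^2/d)) := by
  have h1 : Tendsto (fun t : ℝ => Real.log t / t) atTop (nhds 0) :=
    Real.isLittleO_log_id_atTop.tendsto_div_nhds_zero
  have h2 : Tendsto (fun t : ℝ => 1 / t) atTop (nhds 0) := by
    simpa using tendsto_inv_atTop_zero (𝕜 := ℝ)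
  have heq : ∀ᶠ t : ℝ in atTop,
      -b₀ - 1/2 * (Real.log c * (1/t) + Real.log t / t) - (a + 2*(1/t))^2/d
        = (-(b₀*t) - 1/2 * Real.log (c*t) - (a*t+2)^2/(d*t))/t := by
    filter_upwards [eventually_gt_atTop 0] with t ht
    rw [Real.log_mul (ne_of_gt hc) (ne_of_gt ht)]
    field_simp
  have hlim : Tendsto (fun t : ℝ =>
      -b₀ - 1/2 * (Real.log c * (1/t) + Real.log t / t) - (a + 2*(1/t))^2/d)
      atTop (nhds (-b₀ - 1/2 * (Real.log c * 0 + 0) - (a + 2*0)^2/d)) := by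
    apply Tendsto.sub
    · apply Tendsto.sub tendsto_const_nhds
      exact (Tendsto.add (h2.const_mul _) h1).const_mul _
    · exact (((h2.const_mul 2).const_add a).pow 2).div_const d
  have h := hlim.congr' heq
  convert h using 2
  ring

set_option maxHeartbeats 1000000 in
theorem lemma_sup_integral_asymptotics (σ α v φ : ℝ)
    (hσ : 0 < σ) (hα : α < 1)
    (hv : v = α * Real.sqrt (2 * σ ^ 2))
    (hφ₁ : 1 - Real.sqrt 2 ≤ α → φ = 2 * (Real.sqrt 2 - 1) * (1 - α))
    (hφ₂ : α ≤ 1 - Real.sqrt 2 → φ = 1 + α ^ 2) :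
    Tendsto (fun t : ℝ =>
      Real.log (sSup ((fun τ : ℝ =>
        Real.exp (-τ) *
          ∫ y in Set.Iic (v * t - Real.sqrt (2 * σ ^ 2) * (t - τ) - 1),
            (2 * Real.pi * σ ^ 2 * τ) ^ (-(1 : ℝ) / 2) *
              Real.exp (-y ^ 2 / (2 * σ ^ 2 * τ))) '' Set.Ioc 0 t)) / t)
      atTop (nhds (-φ)) := by
  have hσ2 : (0:ℝ) < σ^2 := by positivity
  obtain ⟨s, hs_def⟩ : ∃ s : ℝ, s = Real.sqrt (2 * σ ^ 2) := ⟨_, rfl⟩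
  obtain ⟨r, hr_def⟩ : ∃ r : ℝ, r = Real.sqrt 2 := ⟨_, rfl⟩
  obtain ⟨β, hβ_def⟩ : ∃ b : ℝ, b = 1 - α := ⟨_, rfl⟩
  rw [← hs_def] at hv
  rw [← hr_def] at hφ₁ hφ₂
  have hs_pos : 0 < s := hs_def ▸ Real.sqrt_pos.2 (by positivity)
  have hs2 : s^2 = 2*σ^2 := hs_def ▸ Real.sq_sqrt (by positivity)
  have hr_pos : 0 < r := hr_def ▸ Real.sqrt_pos.2 (by norm_num)
  have hr2 : r^2 = 2 := hr_def ▸ Real.sq_sqrt (by norm_num)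
  have hr1 : 1 < r := by nlinarith
  have hβ : 0 < β := by rw [hβ_def]; linarith
  simp only [mul_assoc, ← hs_def]
  -- upper bound
  have hupper : ∀ t : ℝ, 0 < t → ∀ τ : ℝ, τ ∈ Set.Ioc (0:ℝ) t →
      Real.exp (-τ) * ∫ y in Set.Iic (v*t - s*(t-τ) - 1),
        (2*(π*(σ^2*τ))) ^ (-(1:ℝ)/2) * Real.exp (-y^2/(2*(σ^2*τ)))
      ≤ Real.exp (-(φ*t)) := by
    intro t ht τ hτmem
    obtain ⟨hτ, hτt⟩ := hτmem
    have hV : (0:ℝ) < σ^2*τ := by positivity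
    have hM_eq : v*t - s*(t-τ) - 1 = s*(τ - β*t) - 1 := by rw [hv, hβ_def]; ring
    by_cases hm : v*t - s*(t-τ) - 1 ≤ 0
    · have hcher := chernoff hV hm
      calc Real.exp (-τ) * ∫ y in Set.Iic (v*t - s*(t-τ) - 1),
            (2*(π*(σ^2*τ))) ^ (-(1:ℝ)/2) * Real.exp (-y^2/(2*(σ^2*τ)))
          ≤ Real.exp (-τ) * Real.exp (-(v*t - s*(t-τ) - 1)^2/(2*(σ^2*τ))) :=
            mul_le_mul_of_nonneg_left hcher (Real.exp_nonneg _)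
        _ = Real.exp (-τ + -(v*t - s*(t-τ) - 1)^2/(2*(σ^2*τ))) := (Real.exp_add _ _).symm
        _ ≤ Real.exp (-(φ*t)) := by
            apply Real.exp_le_exp.2
            have hfact : v*t - s*(t-τ) - 1 = s*(τ - (β*t + s⁻¹)) := by
              rw [hM_eq]; field_simp; ring
            have hMsq : -(v*t - s*(t-τ) - 1)^2/(2*(σ^2*τ)) = -((τ - (β*t + s⁻¹))^2/τ) := by
              rw [hfact, mul_pow, hs2]; field_simp
            rw [hMsq]
            have hgoal : φ*t ≤ τ + (τ - (β*t + s⁻¹))^2/τ := by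
              rw [← sub_nonneg]
              have hsplit : τ + (τ - (β*t + s⁻¹))^2/τ - φ*t
                  = (2*τ^2 - 2*(β*t + s⁻¹)*τ + (β*t + s⁻¹)^2 - φ*t*τ)/τ := by
                field_simp; ring
              rw [hsplit]
              apply div_nonneg _ hτ.le
              have hsinv : (0:ℝ) < s⁻¹ := inv_pos.2 hs_pos
              rcases le_total α (1 - r) with hcase | hcase
              · rw [hφ₂ hcase]
                have hβr : r ≤ β := by rw [hβ_def]; linarith
                have hα0 : α ≤ 0 := by nlinarith
                have hαβ : α = 1 - β := by rw [hβ_def]; ring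
                rw [hαβ]
                have hβ1' : (0:ℝ) ≤ β - 1 := by nlinarith
                have hβr' : r*r ≤ β*β := mul_self_le_mul_self hr_pos.le hβr
                have hB2 : 2*t*τ ≤ (β*t + s⁻¹)^2 := by
                  nlinarith [mul_nonneg (sub_nonneg.2 hτt) ht.le,
                    mul_nonneg (mul_nonneg hβ.le ht.le) hsinv.le, sq_nonneg s⁻¹, sq_nonneg t]
                have hM' : 0 ≤ s⁻¹*s⁻¹ - 2*(1-β)*t*s⁻¹ := by
                  nlinarith [mul_nonneg (mul_nonneg hβ1' ht.le) hsinv.le,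
                    mul_nonneg hsinv.le hsinv.le]
                nlinarith [mul_nonneg (sub_nonneg.2 hτt) (sub_nonneg.2 hB2),
                  mul_nonneg hM' hτ.le]
              · rw [hφ₁ hcase, ← hβ_def]
                nlinarith [sq_nonneg (r*τ - (β*t + s⁻¹)), mul_pos hτ hsinv,
                  mul_pos (mul_pos hβ ht) hτ, mul_pos ht hτ]
            linarith
    · push_neg at hm
      have hβτ : β*t < τ := by nlinarith [hM_eq, hs_pos]
      have hβ1 : β < 1 := by nlinarith
      have hcase : 1 - r ≤ α := by rw [hβ_def] at hβ1; linarith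
      have hφ' : φ = 2*(r-1)*β := by rw [hφ₁ hcase, hβ_def]
      calc Real.exp (-τ) * ∫ y in Set.Iic (v*t - s*(t-τ) - 1),
            (2*(π*(σ^2*τ))) ^ (-(1:ℝ)/2) * Real.exp (-y^2/(2*(σ^2*τ)))
          ≤ Real.exp (-τ) * 1 :=
            mul_le_mul_of_nonneg_left (pdf_int_le_one hV _) (Real.exp_nonneg _)
        _ = Real.exp (-τ) := mul_one _
        _ ≤ Real.exp (-(φ*t)) := by
            apply Real.exp_le_exp.2
            have hr32 : r ≤ 3/2 := by nlinarith
            rw [hφ']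
            nlinarith [mul_pos hβ ht]
  -- key reduction
  have key : ∀ b₀ : ℝ, 0 < b₀ → b₀ ≤ 1 → b₀ ≤ β →
      (-b₀ - (s*(β-b₀))^2/(2*σ^2*b₀) = -φ) →
      Tendsto (fun t : ℝ =>
        Real.log (sSup ((fun τ : ℝ =>
          Real.exp (-τ) * ∫ y in Set.Iic (v*t - s*(t-τ) - 1),
            (2*(π*(σ^2*τ))) ^ (-(1:ℝ)/2) * Real.exp (-y^2/(2*(σ^2*τ)))) '' Set.Ioc 0 t)) / t)
        atTop (nhds (-φ)) := by
    intro b₀ hb₀ hb₀1 hb₀β hlimval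
    set a := s*(β-b₀) with ha_def
    have ha : 0 ≤ a := by
      rw [ha_def]; exact mul_nonneg hs_pos.le (by linarith)
    have hlowT : Tendsto (fun t : ℝ =>
        (-(b₀*t) - 1/2 * Real.log ((2*π*σ^2*b₀)*t) - (a*t+2)^2/((2*σ^2*b₀)*t))/t)
        atTop (nhds (-φ)) := by
      have := tendsto_aux b₀ a (2*π*σ^2*b₀) (2*σ^2*b₀) (by positivity) (by positivity)
      rwa [show -b₀ - a^2/(2*σ^2*b₀) = -φ from by rw [ha_def] at *; exact hlimval] at this
    apply tendsto_of_tendsto_of_tendsto_of_le_of_le' hlowT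
      (tendsto_const_nhds : Tendsto (fun _ : ℝ => -φ) atTop (nhds (-φ)))
    · -- lower bound eventually
      filter_upwards [eventually_ge_atTop (1:ℝ)] with t ht
      have ht0 : (0:ℝ) < t := lt_of_lt_of_le one_pos ht
      have htmem : b₀*t ∈ Set.Ioc (0:ℝ) t := ⟨by positivity, by nlinarith⟩
      have hV : (0:ℝ) < σ^2*(b₀*t) := by positivity
      have hm_eq : v*t - s*(t - b₀*t) - 1 = -(a*t) - 1 := by
        rw [hv, ha_def, hβ_def]; ring
      have hm_le : v*t - s*(t - b₀*t) - 1 ≤ 0 := by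
        rw [hm_eq]; nlinarith [mul_nonneg ha ht0.le]
      have hlower_int := tail_lower hV hm_le
      set Sfun : ℝ → ℝ := fun τ =>
        Real.exp (-τ) * ∫ y in Set.Iic (v*t - s*(t-τ) - 1),
          (2*(π*(σ^2*τ))) ^ (-(1:ℝ)/2) * Real.exp (-y^2/(2*(σ^2*τ))) with hSfun_def
      have hglow : Real.exp (-(b₀*t)) * ((2*(π*(σ^2*(b₀*t)))) ^ (-(1:ℝ)/2) *
          Real.exp (-((v*t - s*(t - b₀*t) - 1)-1)^2/(2*(σ^2*(b₀*t))))) ≤ Sfun (b₀*t) := by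
        rw [hSfun_def]
        exact mul_le_mul_of_nonneg_left hlower_int (Real.exp_nonneg _)
      have hpos : 0 < Real.exp (-(b₀*t)) * ((2*(π*(σ^2*(b₀*t)))) ^ (-(1:ℝ)/2) *
          Real.exp (-((v*t - s*(t - b₀*t) - 1)-1)^2/(2*(σ^2*(b₀*t))))) := by positivity
      have hbdd : BddAbove (Sfun '' Set.Ioc 0 t) := by
        refine ⟨Real.exp (-(φ*t)), ?_⟩
        rintro x ⟨τ, hτ, rfl⟩
        exact hupper t ht0 τ hτ
      have hmem : Sfun (b₀*t) ∈ Sfun '' Set.Ioc 0 t := Set.mem_image_of_mem _ htmem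
      have hsup_ge := le_trans hglow (le_csSup hbdd hmem)
      have hsup_pos : 0 < sSup (Sfun '' Set.Ioc 0 t) := lt_of_lt_of_le hpos hsup_ge
      rw [div_le_div_iff_of_pos_right ht0]
      calc -(b₀*t) - 1/2 * Real.log ((2*π*σ^2*b₀)*t) - (a*t+2)^2/((2*σ^2*b₀)*t)
          = Real.log (Real.exp (-(b₀*t)) * ((2*(π*(σ^2*(b₀*t)))) ^ (-(1:ℝ)/2) *
              Real.exp (-((v*t - s*(t - b₀*t) - 1)-1)^2/(2*(σ^2*(b₀*t)))))) := by
            rw [show ((v*t - s*(t - b₀*t) - 1)-1)^2 = (a*t+2)^2 from by rw [hm_eq]; ring,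
              show (2:ℝ)*(π*(σ^2*(b₀*t))) = (2*π*σ^2*b₀)*t from by ring,
              Real.log_mul (Real.exp_ne_zero _) (by positivity),
              Real.log_mul (by positivity) (Real.exp_ne_zero _),
              Real.log_rpow (by positivity), Real.log_exp, Real.log_exp]
            rw [show (2:ℝ)*(σ^2*(b₀*t)) = (2*σ^2*b₀)*t from by ring]
            ring
        _ ≤ Real.log (sSup (Sfun '' Set.Ioc 0 t)) := Real.log_le_log hpos hsup_ge
    · -- upper bound eventually
      filter_upwards [eventually_ge_atTop (1:ℝ)] with t ht
      have ht0 : (0:ℝ) < t := lt_of_lt_of_le one_pos ht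
      set Sfun : ℝ → ℝ := fun τ =>
        Real.exp (-τ) * ∫ y in Set.Iic (v*t - s*(t-τ) - 1),
          (2*(π*(σ^2*τ))) ^ (-(1:ℝ)/2) * Real.exp (-y^2/(2*(σ^2*τ))) with hSfun_def
      have htmem : b₀*t ∈ Set.Ioc (0:ℝ) t := ⟨by positivity, by nlinarith⟩
      have hV : (0:ℝ) < σ^2*(b₀*t) := by positivity
      have hm_eq : v*t - s*(t - b₀*t) - 1 = -(a*t) - 1 := by
        rw [hv, ha_def, hβ_def]; ring
      have hm_le : v*t - s*(t - b₀*t) - 1 ≤ 0 := by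
        rw [hm_eq]; nlinarith [mul_nonneg ha ht0.le]
      have hglow := le_trans (mul_le_mul_of_nonneg_left (tail_lower hV hm_le)
        (Real.exp_nonneg (-(b₀*t)))) (le_refl (Sfun (b₀*t)))
      have hpos : 0 < Real.exp (-(b₀*t)) * ((2*(π*(σ^2*(b₀*t)))) ^ (-(1:ℝ)/2) *
          Real.exp (-((v*t - s*(t - b₀*t) - 1)-1)^2/(2*(σ^2*(b₀*t))))) := by positivity
      have hbdd : BddAbove (Sfun '' Set.Ioc 0 t) := by
        refine ⟨Real.exp (-(φ*t)), ?_⟩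
        rintro x ⟨τ, hτ, rfl⟩
        exact hupper t ht0 τ hτ
      have hmem : Sfun (b₀*t) ∈ Sfun '' Set.Ioc 0 t := Set.mem_image_of_mem _ htmem
      have hsup_pos : 0 < sSup (Sfun '' Set.Ioc 0 t) :=
        lt_of_lt_of_le hpos (le_trans hglow (le_csSup hbdd hmem))
      have hsup_le : sSup (Sfun '' Set.Ioc 0 t) ≤ Real.exp (-(φ*t)) := by
        apply csSup_le ⟨Sfun (b₀*t), hmem⟩
        rintro x ⟨τ, hτ, rfl⟩
        exact hupper t ht0 τ hτ
      have hlog := (Real.log_le_iff_le_exp hsup_pos).2 hsup_le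
      rw [div_le_iff₀ ht0]
      linarith
  -- conclude by cases
  rcases le_total α (1 - r) with hc | hc
  · have hβr : r ≤ β := by rw [hβ_def]; linarith
    refine key 1 one_pos le_rfl (by linarith) ?_
    rw [hφ₂ hc, hβ_def, mul_pow, hs2]
    field_simp
    ring
  · have hβr : β ≤ r := by rw [hβ_def]; linarith
    refine key (β*r/2) (by positivity) ?_ ?_ ?_
    · nlinarith
    · nlinarith
    · rw [hφ₁ hc, ← hβ_def, mul_pow, hs2]
      field_simp
      have hrr : β^2*σ^2*(r^2-2) = 0 := by rw [hr2]; ring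
      nlinarith [hrr]
end

section
/- Fix σ > 0 and v < √(2σ²). For t > 0 and τ ∈ (0, t], let H(t, τ) = ∫_{-∞}^{v t − √(2σ²)(t−τ) + √t} (2πσ²τ)^{-1/2} e^{−τ − y²/(2σ²τ)} dy. Then limsup over t → ∞ of ln(sup_{τ ∈ (0,t]} H(t, τ))/t equals −φ(v/√(2σ²)), where φ(α) = 2(√2−1)(1−α) for α ≥ 1 − √2 and φ(α) = 1 + α² for α ≤ 1 − √2. -/
open Real Filter MeasureTheory Topology

lemma gauss_full (k : ℝ) (hk : 0 < k) (a : ℝ) :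
    ∫ y : ℝ, Real.exp (-(y + a)^2/(2*k)) = Real.sqrt (2*π*k) := by
  rw [MeasureTheory.integral_add_right_eq_self (fun y : ℝ => Real.exp (-y^2/(2*k))) a]
  have h : ∀ y : ℝ, -y^2/(2*k) = -(1/(2*k)) * y^2 := by intro y; field_simp
  simp_rw [h]
  rw [integral_gaussian]
  congr 1
  field_simp

lemma gauss_integrable (k : ℝ) (hk : 0 < k) (a : ℝ) :
    Integrable (fun y : ℝ => Real.exp (-(y + a)^2/(2*k))) := by
  have h : ∀ y : ℝ, -(y + a)^2/(2*k) = -(1/(2*k)) * (y+a)^2 := by intro y; field_simp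
  simp_rw [h]
  exact (integrable_exp_neg_mul_sq (by positivity)).comp_add_right a

lemma H_upper (σ τ b : ℝ) (hσ : 0 < σ) (hτ : 0 < τ) :
    ∫ y in Set.Iic b, (2*π*σ^2*τ) ^ (-(1:ℝ)/2) * Real.exp (-τ - y^2/(2*σ^2*τ)) ≤
      Real.exp (-τ - (max 0 (-b))^2/(2*σ^2*τ)) := by
  set k : ℝ := σ^2*τ with hkdef
  have hk : 0 < k := by positivity
  set m : ℝ := max 0 (-b) with hmdef
  have hm : 0 ≤ m := le_max_left _ _
  set l : ℝ := m / k with hldef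
  have hl : 0 ≤ l := by positivity
  have hCe : (2*π*σ^2*τ) ^ (-(1:ℝ)/2) = (Real.sqrt (2*π*k))⁻¹ := by
    rw [show (2*π*σ^2*τ : ℝ) = 2*π*k by rw [hkdef]; ring,
      show (-(1:ℝ)/2) = -(1/2) by norm_num, Real.rpow_neg (by positivity),
      ← Real.sqrt_eq_rpow]
  set C : ℝ := (Real.sqrt (2*π*k))⁻¹ with hCdef
  have hC : 0 ≤ C := by positivity
  have hCs : C * Real.sqrt (2*π*k) = 1 := by
    rw [hCdef]; exact inv_mul_cancel₀ (by positivity)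
  have h2k : (2*σ^2*τ : ℝ) = 2*k := by rw [hkdef]; ring
  have key : l*b + l^2*k/2 = -(m^2)/(2*k) := by
    rcases le_or_gt 0 b with h|h
    · have : m = 0 := max_eq_left (by linarith)
      rw [hldef, this]; simp
    · have : m = -b := max_eq_right (by linarith)
      rw [hldef, this]; field_simp; ring
  have hglob : Integrable (fun y : ℝ => C * Real.exp (-τ) * Real.exp (l*b + l^2*k/2)
      * Real.exp (-(y + l*k)^2/(2*k))) :=
    ((gauss_integrable k hk (l*k)).const_mul _)
  have hpt : ∀ y ∈ Set.Iic b, (2*π*σ^2*τ) ^ (-(1:ℝ)/2) * Real.exp (-τ - y^2/(2*σ^2*τ)) ≤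
      C * Real.exp (-τ) * Real.exp (l*b + l^2*k/2) * Real.exp (-(y + l*k)^2/(2*k)) := by
    intro y hy
    rw [hCe, h2k]
    rw [mul_assoc, mul_assoc, ← Real.exp_add, ← Real.exp_add]
    refine mul_le_mul_of_nonneg_left (Real.exp_le_exp.2 ?_) hC
    have hyb : y ≤ b := hy
    have : -τ + (l*b + l^2*k/2 + -(y + l*k)^2/(2*k)) = -τ + (l*(b-y) - y^2/(2*k)) := by
      field_simp; ring
    rw [this]
    have : 0 ≤ l*(b-y) := mul_nonneg hl (by linarith)
    have hd : -τ - y ^ 2 / (2 * k) = -τ + (-y^2/(2*k)) := by ring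
    rw [hd]
    have : -y^2/(2*k) ≤ l*(b-y) - y^2/(2*k) := by linarith [show l*(b-y) - y^2/(2*k) = l*(b-y) + -y^2/(2*k) from by ring]
    linarith
  have hLi : IntegrableOn (fun y : ℝ => (2*π*σ^2*τ) ^ (-(1:ℝ)/2) * Real.exp (-τ - y^2/(2*σ^2*τ)))
      (Set.Iic b) := by
    apply Integrable.integrableOn
    have : ∀ y : ℝ, (2*π*σ^2*τ : ℝ) ^ (-(1:ℝ)/2) * Real.exp (-τ - y^2/(2*σ^2*τ)) =
        ((2*π*σ^2*τ) ^ (-(1:ℝ)/2) * Real.exp (-τ)) * Real.exp (-(y+0)^2/(2*k)) := by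
      intro y
      have he : (-τ - y^2/(2*σ^2*τ)) = -τ + (-(y+0)^2/(2*k)) := by rw [hkdef]; ring
      rw [he, Real.exp_add, ← mul_assoc]
    simp_rw [this]
    exact (gauss_integrable k hk 0).const_mul _
  calc ∫ y in Set.Iic b, (2*π*σ^2*τ) ^ (-(1:ℝ)/2) * Real.exp (-τ - y^2/(2*σ^2*τ))
      ≤ ∫ y in Set.Iic b, C * Real.exp (-τ) * Real.exp (l*b + l^2*k/2)
          * Real.exp (-(y + l*k)^2/(2*k)) := by
        exact setIntegral_mono_on hLi hglob.integrableOn measurableSet_Iic hpt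
    _ ≤ ∫ y : ℝ, C * Real.exp (-τ) * Real.exp (l*b + l^2*k/2)
          * Real.exp (-(y + l*k)^2/(2*k)) := by
        apply setIntegral_le_integral hglob
        filter_upwards with y
        positivity
    _ = Real.exp (-τ - (max 0 (-b))^2/(2*σ^2*τ)) := by
        rw [integral_const_mul, gauss_full k hk, h2k]
        rw [show C * Real.exp (-τ) * Real.exp (l*b + l^2*k/2) * Real.sqrt (2*π*k)
            = (C * Real.sqrt (2*π*k)) * (Real.exp (-τ) * Real.exp (l*b + l^2*k/2)) by ring,
          hCs, one_mul, ← Real.exp_add, key]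
        congr 1
        ring

lemma H_lower (σ τ b : ℝ) (hσ : 0 < σ) (hτ : 0 < τ) (hb : b ≤ 0) :
    (2*π*σ^2*τ) ^ (-(1:ℝ)/2) * Real.exp (-τ - (1-b)^2/(2*σ^2*τ)) ≤
      ∫ y in Set.Iic b, (2*π*σ^2*τ) ^ (-(1:ℝ)/2) * Real.exp (-τ - y^2/(2*σ^2*τ)) := by
  set k : ℝ := σ^2*τ with hkdef
  have hk : 0 < k := by positivity
  set C : ℝ := (2*π*σ^2*τ) ^ (-(1:ℝ)/2) with hCdef
  have hC : 0 < C := by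
    rw [hCdef]; apply Real.rpow_pos_of_pos; positivity
  have hLi : IntegrableOn (fun y : ℝ => C * Real.exp (-τ - y^2/(2*σ^2*τ)))
      (Set.Iic b) := by
    apply Integrable.integrableOn
    have hfun : ∀ y : ℝ, C * Real.exp (-τ - y^2/(2*σ^2*τ)) =
        (C * Real.exp (-τ)) * Real.exp (-(y+0)^2/(2*k)) := by
      intro y
      have he : (-τ - y^2/(2*σ^2*τ)) = -τ + (-(y+0)^2/(2*k)) := by rw [hkdef]; ring
      rw [he, Real.exp_add, ← mul_assoc]
    simp_rw [hfun]
    exact (gauss_integrable k hk 0).const_mul _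
  have h1 : ∫ y in Set.Icc (b-1) b, C * Real.exp (-τ - y^2/(2*σ^2*τ)) ≤
      ∫ y in Set.Iic b, C * Real.exp (-τ - y^2/(2*σ^2*τ)) := by
    apply setIntegral_mono_set hLi
    · filter_upwards with y; positivity
    · exact Filter.Eventually.of_forall (fun y hy => hy.2)
  have h2 : C * Real.exp (-τ - (1-b)^2/(2*σ^2*τ)) ≤
      ∫ y in Set.Icc (b-1) b, C * Real.exp (-τ - y^2/(2*σ^2*τ)) := by
    have hc : ∫ y in Set.Icc (b-1) b, C * Real.exp (-τ - (1-b)^2/(2*σ^2*τ)) =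
        C * Real.exp (-τ - (1-b)^2/(2*σ^2*τ)) := by
      rw [setIntegral_const, Real.volume_real_Icc]
      rw [show b - (b-1) = 1 by ring]
      simp
    rw [← hc]
    apply setIntegral_mono_on
    · exact integrableOn_const (by rw [Real.volume_Icc]; exact ENNReal.ofReal_ne_top)
    · exact hLi.mono_set (fun y hy => hy.2)
    · exact measurableSet_Icc
    · intro y hy
      refine mul_le_mul_of_nonneg_left (Real.exp_le_exp.2 ?_) hC.le
      have hy1 : b - 1 ≤ y := hy.1
      have hy2 : y ≤ b := hy.2
      have hsq : y^2 ≤ (1-b)^2 := by nlinarith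
      have hden : (0:ℝ) < 2*σ^2*τ := by positivity
      have hdv : y^2/(2*σ^2*τ) ≤ (1-b)^2/(2*σ^2*τ) := by gcongr
      linarith
  calc C * Real.exp (-τ - (1-b)^2/(2*σ^2*τ)) ≤ _ := h2
    _ ≤ _ := h1

lemma F_amgm (T τ : ℝ) (hτ : 0 < τ) (hT : 0 ≤ T) :
    -τ - (T-τ)^2/τ ≤ -(2*(Real.sqrt 2 - 1)*T) := by
  have h2 : (Real.sqrt 2)^2 = 2 := Real.sq_sqrt (by norm_num)
  have key : (2*(Real.sqrt 2 - 1)*T - τ) * τ ≤ (T - τ)^2 := by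
    have e : (T - τ)^2 - (2*(Real.sqrt 2 - 1)*T - τ)*τ
        = (Real.sqrt 2*τ - T)^2 + (2 - (Real.sqrt 2)^2)*τ^2 := by ring
    rw [h2] at e
    nlinarith [sq_nonneg (Real.sqrt 2*τ - T)]
  have := (le_div_iff₀ hτ).2 key
  linarith

lemma F_mono (T τ t : ℝ) (hτ : 0 < τ) (ht : τ ≤ t) (h : 2*t^2 ≤ T^2) :
    -τ - (T-τ)^2/τ ≤ -t - (T-t)^2/t := by
  have ht0 : 0 < t := lt_of_lt_of_le hτ ht
  have key : t - τ ≤ (T-τ)^2/τ - (T-t)^2/t := by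
    rw [div_sub_div _ _ hτ.ne' ht0.ne', le_div_iff₀ (by positivity)]
    nlinarith [mul_nonneg (sub_nonneg.2 ht) (show (0:ℝ) ≤ T^2 - 2*(t*τ) by nlinarith)]
  linarith

lemma tendsto_sqrt_atTop' : Tendsto Real.sqrt atTop atTop := by
  apply Filter.tendsto_atTop_atTop.2
  intro b
  refine ⟨b^2, fun a ha => ?_⟩
  calc b ≤ |b| := le_abs_self b
    _ = Real.sqrt (b^2) := (Real.sqrt_sq_eq_abs b).symm
    _ ≤ Real.sqrt a := Real.sqrt_le_sqrt ha

lemma ev_sqrt_le (ε : ℝ) (hε : 0 < ε) : ∀ᶠ t : ℝ in atTop, Real.sqrt t ≤ ε * t := by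
  filter_upwards [tendsto_sqrt_atTop'.eventually_ge_atTop (1/ε), eventually_ge_atTop (0:ℝ)]
    with t h1 h2
  have hs := Real.sq_sqrt h2
  have hs0 := Real.sqrt_nonneg t
  have h1' : 1 ≤ ε * Real.sqrt t := by
    rw [div_le_iff₀ hε] at h1
    nlinarith
  nlinarith


set_option maxHeartbeats 1000000 in
lemma main_bounds (σ v α φ c : ℝ) (hσ : 0 < σ) (hc : c = Real.sqrt (2*σ^2))
    (hα : α = v / c) (hα1 : α < 1) (t : ℝ) (ht1 : 1 ≤ t)
    (hsq1 : Real.sqrt t ≤ (c*(1-α)/2)*t)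
    (hcase : (1 - Real.sqrt 2 ≤ α ∧ φ = 2*(Real.sqrt 2 - 1)*(1-α)) ∨
      (α ≤ 1 - Real.sqrt 2 ∧ φ = 1 + α^2 ∧
        Real.sqrt t ≤ (c*((1-α) - Real.sqrt 2))*t)) :
    Real.exp (-φ*t - (4*c*(1-α)+2)/(σ^2*min (1-α) 1) - Real.log (2*π*σ^2*t)/2)
      ≤ sSup ((fun τ : ℝ => ∫ y in Set.Iic (v*t - c*(t-τ) + Real.sqrt t),
          (2*π*σ^2*τ) ^ (-(1:ℝ)/2) * Real.exp (-τ - y^2/(2*σ^2*τ))) '' Set.Ioc 0 t) ∧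
    sSup ((fun τ : ℝ => ∫ y in Set.Iic (v*t - c*(t-τ) + Real.sqrt t),
          (2*π*σ^2*τ) ^ (-(1:ℝ)/2) * Real.exp (-τ - y^2/(2*σ^2*τ))) '' Set.Ioc 0 t)
        ≤ Real.exp (-φ*t + (2*(2-α)/c)*Real.sqrt t) := by
  have hc0 : 0 < c := by rw [hc]; exact Real.sqrt_pos.2 (by positivity)
  have hc2 : c^2 = 2*σ^2 := by rw [hc]; exact Real.sq_sqrt (by positivity)
  obtain ⟨p, hpdef⟩ : ∃ p : ℝ, p = 1 - α := ⟨_, rfl⟩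
  rw [← hpdef]
  have hp0 : 0 < p := by rw [hpdef]; linarith
  have ht0 : 0 < t := lt_of_lt_of_le one_pos ht1
  have hst0 : 0 ≤ Real.sqrt t := Real.sqrt_nonneg t
  have hs2 : (Real.sqrt 2)^2 = 2 := Real.sq_sqrt (by norm_num)
  have hs2pos : 0 < Real.sqrt 2 := Real.sqrt_pos.2 (by norm_num)
  have hs2gt1 : 1 < Real.sqrt 2 := by nlinarith
  have hvac : v = α * c := by rw [hα]; field_simp
  obtain ⟨T, hTdef⟩ : ∃ T : ℝ, T = p*t - Real.sqrt t/c := ⟨_, rfl⟩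
  have hsq1' : Real.sqrt t / c ≤ p*t/2 := by
    rw [div_le_iff₀ hc0]; nlinarith
  have hT2 : p*t/2 ≤ T := by rw [hTdef]; linarith
  have hT0 : 0 < T := lt_of_lt_of_le (by positivity) hT2
  have hTpt : T ≤ p*t := by
    rw [hTdef]; have : 0 ≤ Real.sqrt t / c := by positivity
    linarith
  have hbT : ∀ τ : ℝ, v*t - c*(t-τ) + Real.sqrt t = -(c*(T - τ)) := by
    intro τ
    rw [hvac, hTdef, hpdef]
    field_simp
    ring
  -- case A shared bound
  have hmin : min p 1 ≤ p := min_le_left _ _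
  have hmin1 : min p 1 ≤ 1 := min_le_right _ _
  have hmin0 : 0 < min p 1 := lt_min hp0 one_pos
  have hs32 : Real.sqrt 2 ≤ 3/2 := by nlinarith [sq_nonneg (Real.sqrt 2 - 3/2)]
  have hcoef : 2*(Real.sqrt 2 - 1) ≤ 1 := by linarith
  -- upper bound on F values
  have key1 : ∀ τ ∈ Set.Ioc (0:ℝ) t,
      -τ - (max 0 (T - τ))^2/τ ≤ -φ*t + (2*(2-α)/c)*Real.sqrt t := by
    intro τ hτ
    obtain ⟨hτ0, hτt⟩ := hτ
    rcases hcase with ⟨hA, hφ⟩ | ⟨hB, hφ, hsq2⟩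
    · have hA2 : -(2*(Real.sqrt 2 - 1)*T) ≤ -φ*t + (2*(2-α)/c)*Real.sqrt t := by
        rw [hφ, hTdef]
        have e1 : -(2*(Real.sqrt 2 - 1)*(p*t - Real.sqrt t/c))
            = -(2*(Real.sqrt 2 - 1)*(1-α))*t + 2*(Real.sqrt 2 - 1)*(Real.sqrt t/c) := by
          rw [hpdef]; ring
        have e2 : (2*(2-α)/c)*Real.sqrt t = 2*(2-α)*(Real.sqrt t/c) := by ring
        rw [e1, e2]
        have hq : 0 ≤ Real.sqrt t/c := by positivity
        have h2a : 2*(Real.sqrt 2 - 1) ≤ 2*(2-α) := by linarith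
        nlinarith [mul_le_mul_of_nonneg_right h2a hq]
      rcases le_or_gt τ T with h | h
      · rw [max_eq_right (by linarith)]
        exact le_trans (F_amgm T τ hτ0 hT0.le) hA2
      · rw [max_eq_left (by linarith)]
        have : -τ - 0^2/τ = -τ := by
          rw [show (0:ℝ)^2 = 0 by norm_num, zero_div]; ring
        rw [this]
        have h1 : 2*(Real.sqrt 2 - 1)*T ≤ 1*T :=
          mul_le_mul_of_nonneg_right hcoef hT0.le
        calc -τ ≤ -(2*(Real.sqrt 2 - 1)*T) := by linarith
          _ ≤ _ := hA2
    · have hTs : Real.sqrt 2 * t ≤ T := by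
        have h9 : Real.sqrt t / c ≤ (p - Real.sqrt 2)*t := by
          rw [div_le_iff₀ hc0, hpdef]; linarith [hsq2]
        rw [hTdef]; linarith
      have htle : t ≤ Real.sqrt 2*t := le_mul_of_one_le_left ht0.le hs2gt1.le
      have hτT : τ ≤ T := by linarith
      have hsqt : (0:ℝ) ≤ Real.sqrt 2 * t := by positivity
      have h2t : 2*t^2 ≤ T^2 := by
        have hmm := mul_le_mul hTs hTs hsqt (le_trans hsqt hTs)
        nlinarith [hmm, hs2, sq_nonneg t]
      rw [max_eq_right (by linarith)]
      have hmono := F_mono T τ t hτ0 hτt h2t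
      have hq : 0 ≤ Real.sqrt t/c := by positivity
      have key : ((1+α^2)*t - t - 2*(1-α)*(Real.sqrt t/c))*t ≤ (T-t)^2 := by
        rw [hTdef, hpdef]
        nlinarith [mul_nonneg ht0.le hq, sq_nonneg (Real.sqrt t/c)]
      have hdiv : (1+α^2)*t - t - 2*(1-α)*(Real.sqrt t/c) ≤ (T-t)^2/t :=
        (le_div_iff₀ ht0).2 key
      have e2 : (2*(2-α)/c)*Real.sqrt t = 2*(2-α)*(Real.sqrt t/c) := by ring
      rw [hφ, e2]
      have h21 : 2*(1-α)*(Real.sqrt t/c) ≤ 2*(2-α)*(Real.sqrt t/c) := by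
        apply mul_le_mul_of_nonneg_right _ hq
        linarith
      linarith
  -- per tau upper bound on the integral
  have keyU : ∀ τ ∈ Set.Ioc (0:ℝ) t,
      (∫ y in Set.Iic (v*t - c*(t-τ) + Real.sqrt t),
        (2*π*σ^2*τ) ^ (-(1:ℝ)/2) * Real.exp (-τ - y^2/(2*σ^2*τ)))
      ≤ Real.exp (-φ*t + (2*(2-α)/c)*Real.sqrt t) := by
    intro τ hτ
    obtain ⟨hτ0, hτt⟩ := hτ
    refine le_trans (H_upper σ τ _ hσ hτ0) (Real.exp_le_exp.2 ?_)
    have hmax : max 0 (-(v*t - c*(t-τ) + Real.sqrt t)) = c * max 0 (T - τ) := by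
      rw [hbT τ, neg_neg, mul_max_of_nonneg _ _ hc0.le, mul_zero]
    have hconv : (max 0 (-(v*t - c*(t-τ) + Real.sqrt t)))^2/(2*σ^2*τ)
        = (max 0 (T - τ))^2/τ := by
      rw [hmax, mul_pow, hc2]
      exact mul_div_mul_left _ _ (by positivity : (2*σ^2 : ℝ) ≠ 0)
    rw [hconv]
    exact key1 τ ⟨hτ0, hτt⟩
  clear key1
  obtain ⟨τ₀, hτ₀0, hτ₀t, hτ₀T, hτ₀m, hF⟩ :
      ∃ τ₀, 0 < τ₀ ∧ τ₀ ≤ t ∧ τ₀ ≤ T ∧ (min p 1)*t/4 ≤ τ₀ ∧ -φ*t ≤ -τ₀ - (T-τ₀)^2/τ₀ := by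
    rcases hcase with ⟨hA, hφ⟩ | ⟨hB, hφ, hsq2⟩
    · have hu0 : 0 < T/Real.sqrt 2 := by positivity
      have hus : Real.sqrt 2 * (T/Real.sqrt 2) = T := mul_div_cancel₀ _ hs2pos.ne'
      have hpb : p ≤ Real.sqrt 2 := by rw [hpdef]; linarith
      refine ⟨T/Real.sqrt 2, hu0, ?_, ?_, ?_, ?_⟩
      · rw [div_le_iff₀ hs2pos]
        nlinarith [mul_le_mul_of_nonneg_right hpb ht0.le]
      · rw [div_le_iff₀ hs2pos]
        nlinarith [hT0.le, hs2gt1]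
      · rw [le_div_iff₀ hs2pos]
        nlinarith [mul_le_mul_of_nonneg_right hmin ht0.le, hT2, hmin0.le, hs32, ht0.le]
      · rw [hφ]
        have key2 : (T - T/Real.sqrt 2)^2 ≤ (2*(Real.sqrt 2 - 1)*(1-α)*t - T/Real.sqrt 2)*(T/Real.sqrt 2) := by
          have hTpt' : T ≤ (1-α)*t := by rw [← hpdef]; exact hTpt
          nlinarith [hs2, hus, mul_nonneg (sub_nonneg.2 hTpt') hu0.le, hs2gt1.le, hu0.le,
            sq_nonneg (T/Real.sqrt 2)]
        have hdd : (T - T/Real.sqrt 2)^2/(T/Real.sqrt 2)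
            ≤ 2*(Real.sqrt 2 - 1)*(1-α)*t - T/Real.sqrt 2 := (div_le_iff₀ hu0).2 key2
        linarith
    · have hTs : Real.sqrt 2 * t ≤ T := by
        have h9 : Real.sqrt t / c ≤ (p - Real.sqrt 2)*t := by
          rw [div_le_iff₀ hc0, hpdef]; linarith [hsq2]
        rw [hTdef]; linarith
      have htle : t ≤ Real.sqrt 2*t := le_mul_of_one_le_left ht0.le hs2gt1.le
      refine ⟨t, ht0, le_refl t, by linarith, ?_, ?_⟩
      · nlinarith [mul_le_mul_of_nonneg_right hmin1 ht0.le]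
      · rw [hφ]
        have h1 : 0 ≤ T - t := by linarith
        have h2 : T - t ≤ -α*t := by
          have := hTpt
          rw [hpdef] at this
          nlinarith
        have key3 : (T-t)^2/t ≤ α^2*t := by
          rw [div_le_iff₀ ht0]
          nlinarith [mul_self_le_mul_self h1 h2]
        linarith
  have hble : v*t - c*(t-τ₀) + Real.sqrt t ≤ 0 := by
    rw [hbT τ₀]
    have : 0 ≤ c*(T-τ₀) := mul_nonneg hc0.le (by linarith)
    linarith
  have hint := H_lower σ τ₀ (v*t - c*(t-τ₀) + Real.sqrt t) hσ hτ₀0 hble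
  have e : (1 - (v*t - c*(t-τ₀) + Real.sqrt t))^2 = 2*σ^2*(T-τ₀)^2 + (2*c*(T-τ₀) + 1) := by
    rw [hbT τ₀, sub_neg_eq_add]
    linear_combination (T-τ₀)^2*hc2
  have hexp : -τ₀ - (1 - (v*t - c*(t-τ₀) + Real.sqrt t))^2/(2*σ^2*τ₀)
      = -τ₀ - (T-τ₀)^2/τ₀ - (2*c*(T-τ₀)+1)/(2*σ^2*τ₀) := by
    rw [e]; field_simp; ring
  have hR : (2*c*(T-τ₀)+1)/(2*σ^2*τ₀) ≤ (4*c*p+2)/(σ^2*min p 1) := by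
    rw [div_le_div_iff₀ (by positivity) (by positivity)]
    have hXp : T - τ₀ ≤ p*t := by linarith
    have ha1 : 2*c*(T-τ₀)+1 ≤ 2*c*(p*t)+1 := by
      have := mul_le_mul_of_nonneg_left hXp hc0.le
      linarith
    nlinarith [mul_le_mul_of_nonneg_right ha1 (show (0:ℝ) ≤ σ^2*min p 1 by positivity),
      mul_le_mul_of_nonneg_left hτ₀m (show (0:ℝ) ≤ (4*c*p+2)*(2*σ^2) by positivity),
      mul_nonneg (mul_nonneg (show (0:ℝ) ≤ σ^2*min p 1 by positivity)
        (show (0:ℝ) ≤ 2*c*p by positivity)) (sub_nonneg.2 ht1),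
      mul_nonneg (show (0:ℝ) ≤ σ^2*min p 1 by positivity) (sub_nonneg.2 ht1)]
  have hτ₀le : 2*π*σ^2*τ₀ ≤ 2*π*σ^2*t := by
    have := mul_le_mul_of_nonneg_left hτ₀t (show (0:ℝ) ≤ 2*π*σ^2 by positivity)
    linarith
  have hpre : (2*π*σ^2*t)^(-(1:ℝ)/2) ≤ (2*π*σ^2*τ₀)^(-(1:ℝ)/2) :=
    Real.rpow_le_rpow_of_nonpos (by positivity) hτ₀le (by norm_num)
  have hpe : (2*π*σ^2*t)^(-(1:ℝ)/2) = Real.exp (-(Real.log (2*π*σ^2*t)/2)) := by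
    rw [Real.rpow_def_of_pos (by positivity)]
    congr 1
    ring
  -- sup bounds
  have hub : ∀ x ∈ ((fun τ : ℝ => ∫ y in Set.Iic (v*t - c*(t-τ) + Real.sqrt t),
      (2*π*σ^2*τ) ^ (-(1:ℝ)/2) * Real.exp (-τ - y^2/(2*σ^2*τ))) '' Set.Ioc 0 t),
      x ≤ Real.exp (-φ*t + (2*(2-α)/c)*Real.sqrt t) := by
    rintro x ⟨τ, hτ, rfl⟩
    exact keyU τ hτ
  have hbdd : BddAbove ((fun τ : ℝ => ∫ y in Set.Iic (v*t - c*(t-τ) + Real.sqrt t),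
      (2*π*σ^2*τ) ^ (-(1:ℝ)/2) * Real.exp (-τ - y^2/(2*σ^2*τ))) '' Set.Ioc 0 t) := ⟨_, hub⟩
  have hsup_le := Real.sSup_le hub (Real.exp_pos _).le
  have hlow := le_csSup hbdd (Set.mem_image_of_mem _ (⟨hτ₀0, hτ₀t⟩ : τ₀ ∈ Set.Ioc 0 t))
  constructor
  · calc Real.exp (-φ*t - (4*c*p+2)/(σ^2*min p 1) - Real.log (2*π*σ^2*t)/2)
        = Real.exp (-(Real.log (2*π*σ^2*t)/2))
            * Real.exp (-φ*t - (4*c*p+2)/(σ^2*min p 1)) := by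
          rw [← Real.exp_add]; congr 1; ring
      _ ≤ (2*π*σ^2*τ₀)^(-(1:ℝ)/2)
            * Real.exp (-τ₀ - (1 - (v*t - c*(t-τ₀) + Real.sqrt t))^2/(2*σ^2*τ₀)) := by
          refine mul_le_mul ?_ ?_ (Real.exp_pos _).le (by positivity)
          · rw [← hpe]; exact hpre
          · apply Real.exp_le_exp.2
            rw [hexp]
            linarith
      _ ≤ _ := hint
      _ ≤ _ := hlow
  · exact hsup_le

set_option maxHeartbeats 1000000 in
theorem sup_integral_limsup_asymptotics (σ v α φ : ℝ)
    (hσ : 0 < σ) (hv : v < Real.sqrt (2 * σ ^ 2))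
    (hα : α = v / Real.sqrt (2 * σ ^ 2))
    (hφ₁ : 1 - Real.sqrt 2 ≤ α → φ = 2 * (Real.sqrt 2 - 1) * (1 - α))
    (hφ₂ : α ≤ 1 - Real.sqrt 2 → φ = 1 + α ^ 2) :
    Filter.limsup (fun t : ℝ =>
      Real.log (sSup ((fun τ : ℝ =>
        ∫ y in Set.Iic (v * t - Real.sqrt (2 * σ ^ 2) * (t - τ) + Real.sqrt t),
          (2 * Real.pi * σ ^ 2 * τ) ^ (-(1 : ℝ) / 2) *
            Real.exp (-τ - y ^ 2 / (2 * σ ^ 2 * τ))) '' Set.Ioc 0 t)) / t)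
      atTop = -φ := by
  have hc : (0:ℝ) < Real.sqrt (2*σ^2) := Real.sqrt_pos.2 (by positivity)
  have hα1 : α < 1 := by rw [hα, div_lt_one hc]; exact hv
  have hφval : (1 - Real.sqrt 2 ≤ α ∧ φ = 2*(Real.sqrt 2 - 1)*(1-α))
      ∨ (α < 1 - Real.sqrt 2 ∧ φ = 1 + α^2) := by
    rcases le_or_gt (1 - Real.sqrt 2) α with h|h
    · exact Or.inl ⟨h, hφ₁ h⟩
    · exact Or.inr ⟨h, hφ₂ h.le⟩
  set K : ℝ := (4*Real.sqrt (2*σ^2)*(1-α)+2)/(σ^2*min (1-α) 1) with hKdef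
  set Bc : ℝ := 2*(2-α)/Real.sqrt (2*σ^2) with hBcdef
  have hev : ∀ᶠ t : ℝ in atTop,
      Real.exp (-φ*t - K - Real.log (2*π*σ^2*t)/2)
        ≤ sSup ((fun τ : ℝ =>
            ∫ y in Set.Iic (v * t - Real.sqrt (2 * σ ^ 2) * (t - τ) + Real.sqrt t),
              (2 * Real.pi * σ ^ 2 * τ) ^ (-(1 : ℝ) / 2) *
                Real.exp (-τ - y ^ 2 / (2 * σ ^ 2 * τ))) '' Set.Ioc 0 t) ∧
      sSup ((fun τ : ℝ =>
            ∫ y in Set.Iic (v * t - Real.sqrt (2 * σ ^ 2) * (t - τ) + Real.sqrt t),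
              (2 * Real.pi * σ ^ 2 * τ) ^ (-(1 : ℝ) / 2) *
                Real.exp (-τ - y ^ 2 / (2 * σ ^ 2 * τ))) '' Set.Ioc 0 t)
          ≤ Real.exp (-φ*t + Bc*Real.sqrt t) := by
    rcases hφval with ⟨hA, hφe⟩ | ⟨hB, hφe⟩
    · filter_upwards [eventually_ge_atTop (1:ℝ),
        ev_sqrt_le (Real.sqrt (2*σ^2)*(1-α)/2) (div_pos (mul_pos hc (by linarith)) two_pos)] with t h1 h2
      exact main_bounds σ v α φ _ hσ rfl hα hα1 t h1 h2 (Or.inl ⟨hA, hφe⟩)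
    · have hps : 0 < (1-α) - Real.sqrt 2 := by linarith
      filter_upwards [eventually_ge_atTop (1:ℝ),
        ev_sqrt_le (Real.sqrt (2*σ^2)*(1-α)/2) (div_pos (mul_pos hc (by linarith)) two_pos),
        ev_sqrt_le (Real.sqrt (2*σ^2)*((1-α) - Real.sqrt 2)) (mul_pos hc hps)] with t h1 h2 h3
      exact main_bounds σ v α φ _ hσ rfl hα hα1 t h1 h2 (Or.inr ⟨hB.le, hφe, h3⟩)
  have hlo : Tendsto (fun t : ℝ => (-φ*t - K - Real.log (2*π*σ^2*t)/2)/t)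
      atTop (𝓝 (-φ)) := by
    have h1 : Tendsto (fun t : ℝ =>
        -φ - (K + Real.log (2*π*σ^2)/2)*t⁻¹ - (Real.log t/t)/2)
        atTop (𝓝 (-φ - (K + Real.log (2*π*σ^2)/2)*0 - 0/2)) := by
      refine Tendsto.sub (Tendsto.sub tendsto_const_nhds
        (tendsto_const_nhds.mul tendsto_inv_atTop_zero)) ?_
      exact (Real.isLittleO_log_id_atTop.tendsto_div_nhds_zero).div_const 2
    norm_num at h1
    refine Tendsto.congr' ?_ h1
    filter_upwards [eventually_gt_atTop (0:ℝ)] with t ht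
    have hlog : Real.log (2*π*σ^2*t) = Real.log (2*π*σ^2) + Real.log t :=
      Real.log_mul (by positivity) ht.ne'
    rw [hlog]
    field_simp
    ring
  have hhi : Tendsto (fun t : ℝ => (-φ*t + Bc*Real.sqrt t)/t) atTop (𝓝 (-φ)) := by
    have hsd : (fun t : ℝ => Real.sqrt t/t) = fun t : ℝ => (Real.sqrt t)⁻¹ := by
      funext x; rw [Real.sqrt_div_self', one_div]
    have hsd2 : Tendsto (fun t : ℝ => Real.sqrt t/t) atTop (𝓝 0) := by
      rw [hsd]
      exact tendsto_sqrt_atTop'.inv_tendsto_atTop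
    have h1 : Tendsto (fun t : ℝ => -φ + Bc*(Real.sqrt t/t)) atTop (𝓝 (-φ + Bc*0)) :=
      tendsto_const_nhds.add (tendsto_const_nhds.mul hsd2)
    norm_num at h1
    refine Tendsto.congr' ?_ h1
    filter_upwards [eventually_gt_atTop (0:ℝ)] with t ht
    field_simp
  have main : Tendsto (fun t : ℝ =>
      Real.log (sSup ((fun τ : ℝ =>
        ∫ y in Set.Iic (v * t - Real.sqrt (2 * σ ^ 2) * (t - τ) + Real.sqrt t),
          (2 * Real.pi * σ ^ 2 * τ) ^ (-(1 : ℝ) / 2) *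
            Real.exp (-τ - y ^ 2 / (2 * σ ^ 2 * τ))) '' Set.Ioc 0 t)) / t)
      atTop (𝓝 (-φ)) := by
    apply tendsto_of_tendsto_of_tendsto_of_le_of_le' hlo hhi
    · filter_upwards [hev, eventually_gt_atTop (0:ℝ)] with t h ht
      have hApos := lt_of_lt_of_le (Real.exp_pos _) h.1
      have hlogA := (Real.le_log_iff_exp_le hApos).2 h.1
      gcongr
    · filter_upwards [hev, eventually_gt_atTop (0:ℝ)] with t h ht
      have hApos := lt_of_lt_of_le (Real.exp_pos _) h.1
      have hlogA := (Real.log_le_iff_le_exp hApos).2 h.2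
      gcongr
  exact main.limsup_eq
end
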